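/- Suppose p > 1, n ≥ 3, a_{Bk} ≥ p and a_{kW} ≥ p for all relevant k ≠ B,W (with a_{BW} ≥ p as well), all entries at most p^3, and reciprocity holds. Then for every j ≠ B,W the LLSM weights satisfy w_j ≥ w_W (the worst alternative receives the smallest weight). -/

import Mathlib

open Finset

/-- the symmetric second case of Theorem 1: under the bounds
`a_{Bk} ≥ p`, `a_{kW} ≥ p`, `a_{BW} ≥ p`, all entries at most `p^3`, the worst
alternative receives the smallest LLSM weight: `w_j ≥ w_W` for all `j ≠ B,W`. -/
theorem bwm_worst_smallest (n : ℕ) (hn : 3 ≤ n) (p : ℝ) (hp : 1 < p)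
    (B W : Fin n) (hBW : B ≠ W)
    (a : Fin n → Fin n → ℝ)
    (hpos : ∀ i j : Fin n, (i = B ∨ i = W ∨ j = B ∨ j = W) → 0 < a i j)
    (hdiag : ∀ i, a i i = 1)
    (hrec : ∀ i j : Fin n, (i = B ∨ i = W ∨ j = B ∨ j = W) → a i j * a j i = 1)
    (hB : ∀ k, k ≠ B → p ≤ a B k)
    (hW : ∀ k, k ≠ W → p ≤ a k W)
    (hBWp : p ≤ a B W)
    (hub : ∀ i j : Fin n, (i = B ∨ i = W ∨ j = B ∨ j = W) → a i j ≤ p ^ 3)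
    (y : Fin n → ℝ)
    (hyB : (n : ℝ) * y B = Real.log (∏ k, a B k))
    (hyW : (n : ℝ) * y W = Real.log (∏ k, a W k))
    (hyj : ∀ j, j ≠ B → j ≠ W → 2 * y j = y B + y W + Real.log (a j B * a j W)) :
    ∀ j, j ≠ B → j ≠ W → Real.exp (y W) ≤ Real.exp (y j) := by
  intro j hjB hjW
  have hppos : (0:ℝ) < p := lt_trans one_pos hp
  set L := Real.log p with hLdef
  have hL : 0 < L := Real.log_pos hp
  have hn3 : (3:ℝ) ≤ (n:ℝ) := by exact_mod_cast hn
  have hBk : ∀ k, 0 < a B k := fun k => hpos B k (Or.inl rfl)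
  have hkW : ∀ k, 0 < a k W := fun k => hpos k W (Or.inr (Or.inr (Or.inr rfl)))
  have hWk : ∀ k, 0 < a W k := fun k => hpos W k (Or.inr (Or.inl rfl))
  have hjBpos : 0 < a j B := hpos j B (Or.inr (Or.inr (Or.inl rfl)))
  -- log bounds helper
  have hlogge : ∀ x : ℝ, p ≤ x → L ≤ Real.log x := by
    intro x hx
    exact Real.log_le_log hppos hx
  have hlogle : ∀ x : ℝ, 0 < x → x ≤ p ^ 3 → Real.log x ≤ 3 * L := by
    intro x hx hx'
    have := Real.log_le_log hx hx'
    rwa [Real.log_pow, Nat.cast_ofNat] at this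
  -- products to sums
  have hlogB : Real.log (∏ k, a B k) = ∑ k, Real.log (a B k) :=
    Real.log_prod (fun k _ => (hBk k).ne')
  have hlogW : Real.log (∏ k, a W k) = ∑ k, Real.log (a W k) :=
    Real.log_prod (fun k _ => (hWk k).ne')
  have hWrec : ∀ k, Real.log (a W k) = - Real.log (a k W) := by
    intro k
    have h := hrec W k (Or.inr (Or.inl rfl))
    have h2 : a W k = (a k W)⁻¹ := eq_inv_of_mul_eq_one_left (by linarith [h, mul_comm (a W k) (a k W)])
    rw [h2, Real.log_inv]
  have hjrec : Real.log (a j B) = - Real.log (a B j) := by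
    have h := hrec j B (Or.inr (Or.inr (Or.inl rfl)))
    have h2 : a j B = (a B j)⁻¹ := eq_inv_of_mul_eq_one_left (by linarith [h, mul_comm (a j B) (a B j)])
    rw [h2, Real.log_inv]
  set f : Fin n → ℝ := fun k => Real.log (a B k) + Real.log (a k W) with hf
  have key1 : (n:ℝ) * (y B - y W) = ∑ k, f k := by
    have e1 : (n:ℝ) * y B = ∑ k, Real.log (a B k) := by rw [hyB, hlogB]
    have e2 : (n:ℝ) * y W = - ∑ k, Real.log (a k W) := by
      rw [hyW, hlogW]
      rw [← Finset.sum_neg_distrib]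
      exact Finset.sum_congr rfl fun k _ => hWrec k
    rw [hf, Finset.sum_add_distrib]
    rw [mul_sub, e1, e2]
    ring
  -- split the sum
  set t : Finset (Fin n) := {B, W, j} with ht
  have hBnot : B ∉ ({W, j} : Finset (Fin n)) := by
    simp [hBW, (Ne.symm hjB)]
  have hWnot : W ∉ ({j} : Finset (Fin n)) := by
    simp [Ne.symm hjW]
  have hsum_t : ∑ k ∈ t, f k = f B + f W + f j := by
    rw [ht, Finset.sum_insert hBnot, Finset.sum_insert hWnot, Finset.sum_singleton]
    ring
  have hsplit : ∑ k ∈ (univ \ t), f k + ∑ k ∈ t, f k = ∑ k, f k :=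
    Finset.sum_sdiff (Finset.subset_univ t)
  have hcard : (univ \ t).card = n - 3 := by
    rw [Finset.card_sdiff_of_subset (Finset.subset_univ t), Finset.card_univ, Fintype.card_fin]
    congr 1
    rw [ht]
    rw [Finset.card_insert_of_notMem hBnot, Finset.card_insert_of_notMem hWnot,
      Finset.card_singleton]
  have hbound : ∀ k ∈ univ \ t, 2 * L ≤ f k := by
    intro k hk
    rw [ht] at hk
    simp only [Finset.mem_sdiff, Finset.mem_univ, Finset.mem_insert,
      Finset.mem_singleton, true_and] at hk
    push_neg at hk
    have h1 : L ≤ Real.log (a B k) := hlogge _ (hB k hk.1)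
    have h2 : L ≤ Real.log (a k W) := hlogge _ (hW k hk.2.1)
    rw [hf]
    dsimp only
    linarith
  have hsum_lb : ((n:ℝ) - 3) * (2 * L) ≤ ∑ k ∈ univ \ t, f k := by
    have h := Finset.card_nsmul_le_sum (univ \ t) f (2 * L) hbound
    rw [hcard, nsmul_eq_mul] at h
    have hcast : ((n - 3 : ℕ) : ℝ) = (n:ℝ) - 3 := by
      push_cast [Nat.cast_sub hn]
      ring
    rwa [hcast] at h
  -- specific values
  have hfB : f B = Real.log (a B W) := by
    rw [hf]; dsimp only; rw [hdiag B, Real.log_one]; ring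
  have hfW : f W = Real.log (a B W) := by
    rw [hf]; dsimp only; rw [hdiag W, Real.log_one]; ring
  have hfj : f j = Real.log (a B j) + Real.log (a j W) := rfl
  have hBWlb : L ≤ Real.log (a B W) := hlogge _ hBWp
  have hjWlb : L ≤ Real.log (a j W) := hlogge _ (hW j hjW)
  have hBjub : Real.log (a B j) ≤ 3 * L :=
    hlogle _ (hBk j) (hub B j (Or.inl rfl))
  -- the weight equation
  have heq : 2 * y j = y B + y W + (- Real.log (a B j) + Real.log (a j W)) := by
    rw [hyj j hjB hjW, Real.log_mul hjBpos.ne' (hkW j).ne', hjrec]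
  -- combine
  have hmain : 0 ≤ (n:ℝ) * (2 * (y j - y W)) := by
    have e : (n:ℝ) * (2 * (y j - y W)) =
        (∑ k ∈ univ \ t, f k) + 2 * Real.log (a B W)
        + ((1:ℝ) - n) * Real.log (a B j) + ((n:ℝ) + 1) * Real.log (a j W) := by
      have h3 : 2 * (y j - y W) = (y B - y W)
          + (- Real.log (a B j) + Real.log (a j W)) := by linarith [heq]
      rw [h3, mul_add, key1, ← hsplit, hsum_t, hfB, hfW, hfj]
      ring
    rw [e]
    have q1 : ((1:ℝ) - n) * (3 * L) ≤ ((1:ℝ) - n) * Real.log (a B j) :=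
      mul_le_mul_of_nonpos_left hBjub (by linarith)
    have q2 : ((n:ℝ) + 1) * L ≤ ((n:ℝ) + 1) * Real.log (a j W) :=
      mul_le_mul_of_nonneg_left hjWlb (by linarith)
    have hzero : ((n:ℝ) - 3) * (2 * L) + 2 * L + ((1:ℝ) - n) * (3 * L)
        + ((n:ℝ) + 1) * L = 0 := by ring
    linarith [hsum_lb, hBWlb, q1, q2, hzero]
  have hyWj : y W ≤ y j := by
    have hnpos : (0:ℝ) < (n:ℝ) := by linarith
    have h2 := (mul_nonneg_iff_of_pos_left hnpos).mp hmain
    linarith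
  exact Real.exp_le_exp.mpr hyWj
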